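/- Let G be a finite connected homogeneous graph with vertex set V. Then a subset C ⊆ V is complete (pairwise adjacent or a singleton) if and only if there exists i ∈ V such that C ⊆ {j ∈ V : N[j] ⊇ N[i]}. Consequently, the maximal cliques of G are exactly the sets V_t = {j ∈ V : N[j] ⊇ N[i]} (for any representative i of t), where t ranges over the maximal elements of the poset T. -/

import Mathlib

open SimpleGraph

/-- The closed neighborhood `N[i] = {i} ∪ {j : j ~ i}`. -/
def closedNbhd {V : Type*} (G : SimpleGraph V) (i : V) : Set V :=
  insert i (G.neighborSet i)

lemma mem_closedNbhd {V : Type*} {G : SimpleGraph V} {i j : V} :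
    j ∈ closedNbhd G i ↔ j = i ∨ G.Adj i j := by
  simp [closedNbhd, SimpleGraph.mem_neighborSet]

lemma self_mem_closedNbhd {V : Type*} {G : SimpleGraph V} (i : V) :
    i ∈ closedNbhd G i := mem_closedNbhd.mpr (Or.inl rfl)

lemma adj_of_subs {V : Type*} {G : SimpleGraph V} {i j k : V}
    (h1 : closedNbhd G i ⊆ closedNbhd G j) (h2 : closedNbhd G i ⊆ closedNbhd G k)
    (hjk : j ≠ k) : G.Adj j k := by
  have hji : j ∈ closedNbhd G i := by
    rcases mem_closedNbhd.mp (h1 (self_mem_closedNbhd i)) with h | h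
    · exact h ▸ self_mem_closedNbhd i
    · exact mem_closedNbhd.mpr (Or.inr h.symm)
  rcases mem_closedNbhd.mp (h2 hji) with h | h
  · exact absurd h hjk
  · exact h.symm

theorem statement5 {V : Type*} [Fintype V] (G : SimpleGraph V) (hconn : G.Connected)
    (hhom : ∀ i j : V, G.Adj i j →
      (closedNbhd G i ⊆ closedNbhd G j ∨ closedNbhd G j ⊆ closedNbhd G i)) :
    -- a subset is complete iff it is contained in some `V_t = {j : N[j] ⊇ N[i]}`
    (∀ C : Set V, C.Pairwise G.Adj ↔
      ∃ i : V, ∀ j ∈ C, closedNbhd G i ⊆ closedNbhd G j) ∧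
    -- the maximal cliques are exactly the sets `V_t` for `t` maximal in the poset `T`
    (∀ D : Set V,
      (D.Pairwise G.Adj ∧ ∀ D' : Set V, D'.Pairwise G.Adj → D ⊆ D' → D = D') ↔
      ∃ i : V, (∀ j : V, closedNbhd G j ⊆ closedNbhd G i → closedNbhd G i ⊆ closedNbhd G j) ∧
        D = {j : V | closedNbhd G i ⊆ closedNbhd G j}) := by
  have part1 : ∀ C : Set V, C.Pairwise G.Adj ↔
      ∃ i : V, ∀ j ∈ C, closedNbhd G i ⊆ closedNbhd G j := by
    intro C
    constructor
    · intro hC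
      rcases C.eq_empty_or_nonempty with rfl | hne
      · obtain ⟨v⟩ := hconn.nonempty
        exact ⟨v, by simp⟩
      · obtain ⟨a, haC, hmin⟩ :=
          (Set.toFinite C).exists_minimalFor (fun j => closedNbhd G j) C hne
        refine ⟨a, fun j hj => ?_⟩
        by_cases hja : j = a
        · subst hja; exact le_refl _
        · rcases hhom a j (hC haC hj (Ne.symm hja)) with h | h
          · exact h
          · exact hmin hj h
    · rintro ⟨i, hi⟩ j hj k hk hjk
      exact adj_of_subs (hi j hj) (hi k hk) hjk
  refine ⟨part1, fun D => ?_⟩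
  constructor
  · rintro ⟨hD, hmax⟩
    obtain ⟨i, hi⟩ := (part1 D).mp hD
    have hDE : D = {j : V | closedNbhd G i ⊆ closedNbhd G j} := by
      refine hmax _ ((part1 _).mpr ⟨i, fun j hj => hj⟩) (fun j hj => hi j hj)
    refine ⟨i, fun k hk => ?_, hDE⟩
    have hDk : D = {j : V | closedNbhd G k ⊆ closedNbhd G j} := by
      refine hmax _ ((part1 _).mpr ⟨k, fun j hj => hj⟩)
        (fun j hj => le_trans hk (hi j hj))
    have : k ∈ D := by rw [hDk]; exact Set.mem_setOf_eq ▸ subset_rfl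
    rw [hDE] at this
    exact this
  · rintro ⟨i, hmaxi, rfl⟩
    refine ⟨(part1 _).mpr ⟨i, fun j hj => hj⟩, fun D' hD' hsub => ?_⟩
    obtain ⟨k, hk⟩ := (part1 D').mp hD'
    have hki : closedNbhd G k ⊆ closedNbhd G i :=
      hk i (hsub (Set.mem_setOf_eq ▸ Set.Subset.refl (closedNbhd G i)))
    have hik := hmaxi k hki
    refine Set.Subset.antisymm hsub (fun j hj => le_trans hik (hk j hj))
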